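/- Let (G, P_X) be a probabilistic graph on finite vertex set X, and S ⊆ X with P_X(S) > 0. Then the chromatic entropy satisfies H_χ(G, P_X) − 1 − (1 − P_X(S))·log₂|X| ≤ H_χ(G[S], P_X/P_X(S)) ≤ H_χ(G, P_X)/P_X(S), where G[S] is the induced subgraph on S and P_X/P_X(S) is the conditional distribution of X given X ∈ S. -/

import Mathlib

open Finset

noncomputable def H2 {A : Type*} [Fintype A] (p : A → ℝ) : ℝ :=
  -∑ a, p a * Real.logb 2 (p a)

noncomputable def colorEntropy {V : Type*} [Fintype V] (p : V → ℝ) (c : V → ℕ) : ℝ :=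
  -∑ k ∈ Finset.univ.image c,
      (∑ v ∈ Finset.univ.filter (fun v => c v = k), p v) *
        Real.logb 2 (∑ v ∈ Finset.univ.filter (fun v => c v = k), p v)

noncomputable def Hchi {V : Type*} [Fintype V] (G : SimpleGraph V) (p : V → ℝ) : ℝ :=
  sInf {x | ∃ c : V → ℕ, (∀ u v, G.Adj u v → c u ≠ c v) ∧ x = colorEntropy p c}

/-- Gibbs-type inequality. -/
lemma gibbs_aux {ι : Type*} (s : Finset ι) (a b : ι → ℝ)
    (ha : ∀ i ∈ s, 0 ≤ a i) (hb : ∀ i ∈ s, 0 ≤ b i)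
    (hab : ∀ i ∈ s, 0 < b i → 0 < a i) :
    ∑ i ∈ s, b i * Real.logb 2 (a i) - ∑ i ∈ s, b i * Real.logb 2 (b i)
      ≤ (∑ i ∈ s, (a i - b i)) / Real.log 2 := by
  have hlog2 : (0:ℝ) < Real.log 2 := Real.log_pos one_lt_two
  rw [← Finset.sum_sub_distrib, Finset.sum_div]
  refine Finset.sum_le_sum fun i hi => ?_
  rcases eq_or_lt_of_le (hb i hi) with hb0 | hb0
  · rw [← hb0]
    simp only [zero_mul, sub_zero, sub_self]
    exact div_nonneg (ha i hi) hlog2.le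
  · have ha0 : 0 < a i := hab i hi hb0
    have h1 : Real.log (a i / b i) ≤ a i / b i - 1 :=
      Real.log_le_sub_one_of_pos (div_pos ha0 hb0)
    have h2 : Real.logb 2 (a i) - Real.logb 2 (b i) = Real.log (a i / b i) / Real.log 2 := by
      rw [Real.log_div ha0.ne' hb0.ne', Real.logb, Real.logb, div_sub_div_same]
    have h3 : b i * Real.logb 2 (a i) - b i * Real.logb 2 (b i)
        = b i * (Real.log (a i / b i) / Real.log 2) := by rw [← mul_sub, h2]
    rw [h3]
    calc b i * (Real.log (a i / b i) / Real.log 2)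
        ≤ b i * ((a i / b i - 1) / Real.log 2) := by gcongr
      _ = (a i - b i) / Real.log 2 := by field_simp

lemma colorEntropy_nonneg {W : Type*} [Fintype W] (p : W → ℝ)
    (hp0 : ∀ v, 0 ≤ p v) (hp1 : ∑ v, p v ≤ 1) (c : W → ℕ) :
    0 ≤ colorEntropy p c := by
  rw [colorEntropy, neg_nonneg]
  refine Finset.sum_nonpos fun k _ => ?_
  have h0 : 0 ≤ ∑ v ∈ Finset.univ.filter (fun v => c v = k), p v :=
    Finset.sum_nonneg fun v _ => hp0 v
  have h1 : ∑ v ∈ Finset.univ.filter (fun v => c v = k), p v ≤ 1 :=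
    le_trans (Finset.sum_le_sum_of_subset_of_nonneg (Finset.filter_subset _ _)
      fun v _ _ => hp0 v) hp1
  exact mul_nonpos_of_nonneg_of_nonpos h0 (Real.logb_nonpos one_lt_two h0 h1)

lemma hchi_nonempty {W : Type*} [Fintype W] (G : SimpleGraph W) (p : W → ℝ) :
    {x | ∃ c : W → ℕ, (∀ u v, G.Adj u v → c u ≠ c v) ∧ x = colorEntropy p c}.Nonempty := by
  classical
  exact ⟨colorEntropy p (fun v => ((Fintype.equivFin W) v : ℕ)),
    fun v => ((Fintype.equivFin W) v : ℕ),
    fun u v huv h => huv.ne ((Fintype.equivFin W).injective (Fin.val_injective h)), rfl⟩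

lemma hchi_bddBelow {W : Type*} [Fintype W] (G : SimpleGraph W) (p : W → ℝ)
    (hp0 : ∀ v, 0 ≤ p v) (hp1 : ∑ v, p v ≤ 1) :
    BddBelow {x | ∃ c : W → ℕ, (∀ u v, G.Adj u v → c u ≠ c v) ∧ x = colorEntropy p c} := by
  refine ⟨0, ?_⟩
  rintro x ⟨c, -, rfl⟩
  exact colorEntropy_nonneg p hp0 hp1 c

/-- partition of the total mass into color classes -/
lemma sum_classes {W : Type*} [Fintype W] (c : W → ℕ) (f : W → ℝ) :
    ∑ k ∈ Finset.univ.image c, ∑ v ∈ Finset.univ.filter (fun v => c v = k), f v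
      = ∑ v, f v := by
  classical
  calc ∑ k ∈ Finset.univ.image c, ∑ v ∈ Finset.univ.filter (fun v => c v = k), f v
      = ∑ k ∈ Finset.univ.image c, ∑ v ∈ Finset.univ, if c v = k then f v else 0 := by
        simp [Finset.sum_filter]
    _ = ∑ v ∈ Finset.univ, ∑ k ∈ Finset.univ.image c, if c v = k then f v else 0 :=
        Finset.sum_comm
    _ = ∑ v, f v := by
        refine Finset.sum_congr rfl fun v _ => ?_
        rw [Finset.sum_ite_eq (Finset.univ.image c) (c v) (fun _ => f v)]
        simp

lemma sum_subcoe {V : Type*} [Fintype V] (S : Finset V) (f : V → ℝ) :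
    ∑ v : ↥(S : Set V), f v.1 = ∑ v ∈ S, f v := by
  rw [Finset.sum_finset_coe]

lemma sum_subcoe_filter {V : Type*} [Fintype V] (S : Finset V) (q : V → Prop) [DecidablePred q]
    (f : V → ℝ) :
    ∑ v ∈ Finset.univ.filter (fun v : ↥(S : Set V) => q v.1), f v.1 = ∑ v ∈ S.filter q, f v := by
  rw [Finset.sum_filter, Finset.sum_filter]
  exact sum_subcoe S (fun v => if q v then f v else 0)

/-- rescaling identity for entropy of conditional distribution -/
lemma scale_entropy {ι : Type*} (J : Finset ι) (r : ι → ℝ) (P : ℝ) (hP : 0 < P)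
    (hr : ∀ j ∈ J, 0 ≤ r j) (hsum : ∑ j ∈ J, r j = P) :
    P * (-∑ j ∈ J, (r j / P) * Real.logb 2 (r j / P))
      = -∑ j ∈ J, r j * Real.logb 2 (r j) + P * Real.logb 2 P := by
  have key : ∀ j ∈ J, P * ((r j / P) * Real.logb 2 (r j / P))
      = r j * Real.logb 2 (r j) - r j * Real.logb 2 P := by
    intro j hj
    rcases eq_or_lt_of_le (hr j hj) with h0 | h0
    · rw [← h0]; simp
    · rw [Real.logb_div h0.ne' hP.ne']
      field_simp
  calc P * (-∑ j ∈ J, (r j / P) * Real.logb 2 (r j / P))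
      = -∑ j ∈ J, P * ((r j / P) * Real.logb 2 (r j / P)) := by
        rw [mul_neg, Finset.mul_sum]
    _ = -∑ j ∈ J, (r j * Real.logb 2 (r j) - r j * Real.logb 2 P) := by
        rw [Finset.sum_congr rfl key]
    _ = -(∑ j ∈ J, r j * Real.logb 2 (r j) - (∑ j ∈ J, r j) * Real.logb 2 P) := by
        rw [Finset.sum_sub_distrib, Finset.sum_mul]
    _ = -∑ j ∈ J, r j * Real.logb 2 (r j) + P * Real.logb 2 P := by rw [hsum]; ring

theorem stmt8 {V : Type*} [Fintype V] (G : SimpleGraph V) (p : V → ℝ)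
    (hp : p ∈ stdSimplex ℝ V) (S : Finset V) (hS : 0 < ∑ v ∈ S, p v) :
    Hchi G p - 1 - (1 - ∑ v ∈ S, p v) * Real.logb 2 (Fintype.card V) ≤
      Hchi (G.induce (S : Set V)) (fun v => p v.1 / ∑ u ∈ S, p u) ∧
    Hchi (G.induce (S : Set V)) (fun v => p v.1 / ∑ u ∈ S, p u) ≤
      Hchi G p / ∑ v ∈ S, p v := by
  classical
  obtain ⟨hp0, hp1⟩ := hp
  set P := ∑ v ∈ S, p v with hP_def
  have hP : 0 < P := hS
  have hP1 : P ≤ 1 := by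
    rw [hP_def, ← hp1]
    exact Finset.sum_le_sum_of_subset_of_nonneg (Finset.subset_univ S) fun v _ _ => hp0 v
  set p' : ↥(S : Set V) → ℝ := fun v => p v.1 / P with hp'_def
  have hp'0 : ∀ v, 0 ≤ p' v := fun v => div_nonneg (hp0 v.1) hP.le
  have hp'1 : ∑ v, p' v = 1 := by
    rw [hp'_def]
    rw [← Finset.sum_div, sum_subcoe, div_self hP.ne']
  have hlog2 : (0:ℝ) < Real.log 2 := Real.log_pos one_lt_two
  -- key2 : restricting a proper coloring of G to S
  have key2 : ∀ c : V → ℕ, (∀ u v, G.Adj u v → c u ≠ c v) →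
      P * colorEntropy p' (fun v => c v.1) ≤ colorEntropy p c := by
    intro c _
    set r : ℕ → ℝ := fun k => ∑ v ∈ S.filter (fun v => c v = k), p v with hr_def
    set q : ℕ → ℝ := fun k => ∑ v ∈ Finset.univ.filter (fun v => c v = k), p v with hq_def
    set I' : Finset ℕ := (Finset.univ : Finset ↥(S : Set V)).image (fun v => c v.1) with hI'_def
    set I : Finset ℕ := Finset.univ.image c with hI_def
    have hI'I : I' ⊆ I := by
      intro k hk
      rw [hI'_def, Finset.mem_image] at hk
      obtain ⟨v, -, rfl⟩ := hk
      exact Finset.mem_image_of_mem c (Finset.mem_univ v.1)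
    have hr0 : ∀ k, 0 ≤ r k := fun k => Finset.sum_nonneg fun v _ => hp0 v
    have hq0 : ∀ k, 0 ≤ q k := fun k => Finset.sum_nonneg fun v _ => hp0 v
    have hrq : ∀ k, r k ≤ q k := fun k =>
      Finset.sum_le_sum_of_subset_of_nonneg
        (Finset.filter_subset_filter _ (Finset.subset_univ S)) fun v _ _ => hp0 v
    have hq1 : ∀ k, q k ≤ 1 := fun k => le_trans
      (Finset.sum_le_sum_of_subset_of_nonneg (Finset.filter_subset _ _) fun v _ _ => hp0 v)
      hp1.le
    have hinner : ∀ k, (∑ v ∈ Finset.univ.filter (fun v : ↥(S : Set V) => c v.1 = k), p' v)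
        = r k / P := by
      intro k
      have : ∑ v ∈ Finset.univ.filter (fun v : ↥(S : Set V) => c v.1 = k), p' v
          = ∑ v ∈ Finset.univ.filter (fun v : ↥(S : Set V) => c v.1 = k), p v.1 / P := rfl
      rw [this, ← Finset.sum_div]
      rw [sum_subcoe_filter S (fun v => c v = k) p]
    have hEnt' : colorEntropy p' (fun v => c v.1)
        = -∑ k ∈ I', (r k / P) * Real.logb 2 (r k / P) := by
      rw [colorEntropy]
      refine congrArg Neg.neg (Finset.sum_congr rfl fun k _ => ?_)
      rw [hinner k]
    have hsumI' : ∑ k ∈ I', r k = P := by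
      have h1 := sum_classes (fun v : ↥(S : Set V) => c v.1) (fun v => p v.1)
      rw [sum_subcoe] at h1
      rw [hP_def, ← h1]
      refine Finset.sum_congr rfl fun k _ => ?_
      exact (sum_subcoe_filter S (fun v => c v = k) p).symm
    have hsumI : ∑ k ∈ I, q k = 1 := by rw [← hp1]; exact sum_classes c p
    have hsI'q : ∑ k ∈ I', q k ≤ 1 := by
      rw [← hsumI]
      exact Finset.sum_le_sum_of_subset_of_nonneg hI'I fun k _ _ => hq0 k
    -- Gibbs inequality
    have hgibbs := gibbs_aux I' (fun k => q k * P) r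
      (fun k _ => mul_nonneg (hq0 k) hP.le) (fun k _ => hr0 k)
      (fun k _ hrk => mul_pos (lt_of_lt_of_le hrk (hrq k)) hP)
    have hsplit : ∑ k ∈ I', r k * Real.logb 2 (q k * P)
        = ∑ k ∈ I', r k * Real.logb 2 (q k) + P * Real.logb 2 P := by
      have : ∀ k ∈ I', r k * Real.logb 2 (q k * P)
          = r k * Real.logb 2 (q k) + r k * Real.logb 2 P := by
        intro k _
        rcases eq_or_lt_of_le (hr0 k) with h0 | h0
        · rw [← h0]; ring
        · have hqk : 0 < q k := lt_of_lt_of_le h0 (hrq k)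
          rw [Real.logb_mul hqk.ne' hP.ne']; ring
      rw [Finset.sum_congr rfl this, Finset.sum_add_distrib, ← Finset.sum_mul, hsumI']
    have hrhs : (∑ k ∈ I', (q k * P - r k)) / Real.log 2 ≤ 0 := by
      refine div_nonpos_of_nonpos_of_nonneg ?_ hlog2.le
      rw [Finset.sum_sub_distrib, ← Finset.sum_mul, hsumI']
      nlinarith
    have stepb : ∑ k ∈ I', r k * Real.logb 2 (q k) + P * Real.logb 2 P
        - ∑ k ∈ I', r k * Real.logb 2 (r k) ≤ 0 := by
      rw [← hsplit]; linarith
    have stepa : ∑ k ∈ I', q k * Real.logb 2 (q k) ≤ ∑ k ∈ I', r k * Real.logb 2 (q k) :=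
      Finset.sum_le_sum fun k _ =>
        mul_le_mul_of_nonpos_right (hrq k) (Real.logb_nonpos one_lt_two (hq0 k) (hq1 k))
    have stepc : ∑ k ∈ I', q k * Real.logb 2 (q k) ≥ ∑ k ∈ I, q k * Real.logb 2 (q k) := by
      have h := Finset.sum_le_sum_of_subset_of_nonneg hI'I
        (f := fun k => -(q k * Real.logb 2 (q k)))
        (fun k _ _ => neg_nonneg.2
          (mul_nonpos_of_nonneg_of_nonpos (hq0 k) (Real.logb_nonpos one_lt_two (hq0 k) (hq1 k))))
      rw [Finset.sum_neg_distrib, Finset.sum_neg_distrib] at h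
      linarith
    have hE : colorEntropy p c = -∑ k ∈ I, q k * Real.logb 2 (q k) := rfl
    have hPE' : P * colorEntropy p' (fun v => c v.1)
        = -∑ k ∈ I', r k * Real.logb 2 (r k) + P * Real.logb 2 P := by
      rw [hEnt']
      exact scale_entropy I' r P hP (fun j _ => hr0 j) hsumI'
    rw [hE, hPE']
    linarith
  -- the complement set and its mass
  set NS : Finset V := Finset.univ.filter (fun v => v ∉ S) with hNS_def
  set Q : ℝ := ∑ v ∈ NS, p v with hQ_def
  have hQ0 : 0 ≤ Q := Finset.sum_nonneg fun v _ => hp0 v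
  have hPQ : P + Q = 1 := by
    have hsp := Finset.sum_filter_add_sum_filter_not Finset.univ (fun v => v ∈ S) p
    have h1 : Finset.univ.filter (fun v => v ∈ S) = S := by ext v; simp
    rw [h1] at hsp
    rw [hP_def, hQ_def, hNS_def, ← hp1]
    exact hsp
  have hcard : 1 ≤ Fintype.card V := by
    obtain ⟨v, hv⟩ : S.Nonempty := by
      by_contra h
      rw [Finset.not_nonempty_iff_eq_empty] at h
      rw [hP_def, h] at hP; simp at hP
    exact Fintype.card_pos_iff.2 ⟨v⟩
  set n : ℝ := (Fintype.card V : ℝ) with hn_def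
  have hn : (1:ℝ) ≤ n := by rw [hn_def]; exact_mod_cast hcard
  -- binary entropy bound
  have hbin : -(P * Real.logb 2 P) - Q * Real.logb 2 Q ≤ 1 := by
    have hgibbs := gibbs_aux ({0, 1} : Finset ℕ) (fun _ => (2:ℝ)⁻¹)
      (fun i => if i = 0 then P else Q)
      (fun i _ => by positivity) (fun i _ => by by_cases h : i = 0 <;> simp [h, hP.le, hQ0])
      (fun i _ _ => by positivity)
    rw [Finset.sum_pair (by norm_num), Finset.sum_pair (by norm_num),
      Finset.sum_pair (by norm_num)] at hgibbs
    norm_num at hgibbs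
    have hhalf : Real.logb 2 ((1:ℝ)/2) = -1 := by
      rw [one_div, Real.logb_inv, Real.logb_self_eq_one one_lt_two]
    rw [hhalf] at hgibbs
    have h3 : (1 / 2 - P + (1 / 2 - Q)) / Real.log 2 = 0 := by
      rw [show (1:ℝ) / 2 - P + (1 / 2 - Q) = 1 - (P + Q) by ring, hPQ]; simp
    rw [h3] at hgibbs
    linarith
  -- max entropy bound on the complement
  have hmaxent : -∑ v ∈ NS, p v * Real.logb 2 (p v) ≤ Q * Real.logb 2 n - Q * Real.logb 2 Q := by
    rcases eq_or_lt_of_le hQ0 with h0 | h0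
    · have hz : ∀ v ∈ NS, p v = 0 := by
        intro v hv
        exact (Finset.sum_eq_zero_iff_of_nonneg (fun v _ => hp0 v)).1 h0.symm v hv
      have hz2 : ∑ v ∈ NS, p v * Real.logb 2 (p v) = 0 :=
        Finset.sum_eq_zero fun v hv => by rw [hz v hv]; ring
      rw [hz2, ← h0]
      simp
    · have hn0 : (0:ℝ) < n := by linarith
      have hgibbs := gibbs_aux NS (fun _ => Q / n) p
        (fun v _ => div_nonneg hQ0 hn0.le) (fun v _ => hp0 v)
        (fun v _ _ => div_pos h0 hn0)
      have hconst : Real.logb 2 (Q / n) = Real.logb 2 Q - Real.logb 2 n :=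
        Real.logb_div h0.ne' hn0.ne'
      have hlhs : ∑ v ∈ NS, p v * Real.logb 2 (Q / n)
          = Q * (Real.logb 2 Q - Real.logb 2 n) := by
        rw [← Finset.sum_mul, ← hQ_def, hconst]
      have hnum : ∑ v ∈ NS, (Q / n - p v) ≤ 0 := by
        rw [Finset.sum_sub_distrib, Finset.sum_const, nsmul_eq_mul, ← hQ_def]
        have hcardNS : (NS.card : ℝ) ≤ n := by
          rw [hn_def]
          exact_mod_cast le_trans (Finset.card_filter_le _ _) (le_of_eq Finset.card_univ)
        have : (NS.card : ℝ) * (Q / n) ≤ n * (Q / n) :=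
          mul_le_mul_of_nonneg_right hcardNS (div_nonneg hQ0 hn0.le)
        have heq : n * (Q / n) = Q := by field_simp
        linarith
      have hrhs : (∑ v ∈ NS, (Q / n - p v)) / Real.log 2 ≤ 0 :=
        div_nonpos_of_nonpos_of_nonneg hnum hlog2.le
      rw [hlhs] at hgibbs
      linarith
  -- key1 : extending a proper coloring of G[S] to G
  have key1 : ∀ c' : ↥(S : Set V) → ℕ,
      (∀ u v, (G.induce (S : Set V)).Adj u v → c' u ≠ c' v) →
      Hchi G p - 1 - Q * Real.logb 2 n ≤ colorEntropy p' c' := by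
    intro c' hc'
    set e := Fintype.equivFin V with he_def
    set c : V → ℕ := fun v => if h : v ∈ S then 2 * c' ⟨v, h⟩ else 2 * (e v : ℕ) + 1
      with hc_def
    have hcS : ∀ v : ↥(S : Set V), c v.1 = 2 * c' v := by
      intro v
      have hv : v.1 ∈ S := v.2
      simp [hc_def, hv]
    have hcNS : ∀ v, v ∉ S → c v = 2 * (e v : ℕ) + 1 := by
      intro v hv; simp [hc_def, hv]
    have hproper : ∀ u v, G.Adj u v → c u ≠ c v := by
      intro u v huv heq
      by_cases hu : u ∈ S <;> by_cases hv : v ∈ S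
      · rw [hcS ⟨u, hu⟩, hcS ⟨v, hv⟩] at heq
        exact hc' ⟨u, hu⟩ ⟨v, hv⟩ huv (by omega)
      · rw [hcS ⟨u, hu⟩, hcNS v hv] at heq; omega
      · rw [hcNS u hu, hcS ⟨v, hv⟩] at heq; omega
      · rw [hcNS u hu, hcNS v hv] at heq
        exact huv.ne (e.injective (Fin.val_injective (by omega : (e u : ℕ) = e v)))
    set J : Finset ℕ := (Finset.univ : Finset ↥(S : Set V)).image c' with hJ_def
    set rr : ℕ → ℝ := fun j =>
      ∑ v ∈ Finset.univ.filter (fun v : ↥(S : Set V) => c' v = j), p v.1 with hrr_def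
    have hrr0 : ∀ j, 0 ≤ rr j := fun j => Finset.sum_nonneg fun v _ => hp0 v.1
    have hJsum : ∑ j ∈ J, rr j = P := by
      have h1 := sum_classes c' (fun v : ↥(S : Set V) => p v.1)
      rw [sum_subcoe] at h1
      rw [hP_def, ← h1]
    have hE' : colorEntropy p' c' = -∑ j ∈ J, (rr j / P) * Real.logb 2 (rr j / P) := by
      rw [colorEntropy]
      refine congrArg Neg.neg (Finset.sum_congr rfl fun j _ => ?_)
      have : ∑ v ∈ Finset.univ.filter (fun v => c' v = j), p' v = rr j / P := by
        rw [hrr_def, Finset.sum_div]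
      rw [this]
    set q : ℕ → ℝ := fun k => ∑ v ∈ Finset.univ.filter (fun v => c v = k), p v with hq2_def
    set K : Finset ℕ := Finset.univ.image c with hK_def
    have hEc : colorEntropy p c = -∑ k ∈ K, q k * Real.logb 2 (q k) := rfl
    have hsplitK := Finset.sum_filter_add_sum_filter_not K (fun k => k % 2 = 0)
      (fun k => q k * Real.logb 2 (q k))
    have hKeven : K.filter (fun k => k % 2 = 0) = J.image (fun j => 2 * j) := by
      ext k
      simp only [hK_def, hJ_def, Finset.mem_filter, Finset.mem_image, Finset.mem_univ, true_and]
      constructor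
      · rintro ⟨⟨v, rfl⟩, hpar⟩
        by_cases hv : v ∈ S
        · exact ⟨c' ⟨v, hv⟩, ⟨⟨v, hv⟩, rfl⟩, (hcS ⟨v, hv⟩).symm⟩
        · rw [hcNS v hv] at hpar; omega
      · rintro ⟨j, ⟨w, rfl⟩, rfl⟩
        exact ⟨⟨w.1, hcS w⟩, by omega⟩
    have heven_sum : ∑ k ∈ K.filter (fun k => k % 2 = 0), q k * Real.logb 2 (q k)
        = ∑ j ∈ J, q (2 * j) * Real.logb 2 (q (2 * j)) := by
      rw [hKeven]
      exact Finset.sum_image fun a _ b _ h => by omega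
    have hq2j : ∀ j, q (2 * j) = rr j := by
      intro j
      have hfe : Finset.univ.filter (fun v => c v = 2 * j)
          = S.filter (fun v => c v = 2 * j) := by
        ext v
        simp only [Finset.mem_filter, Finset.mem_univ, true_and]
        constructor
        · intro h
          refine ⟨?_, h⟩
          by_contra hv
          rw [hcNS v hv] at h; omega
        · exact fun h => h.2
      have h2 : q (2 * j) = ∑ v ∈ S.filter (fun v => c v = 2 * j), p v := by
        simp only [hq2_def]; rw [hfe]
      rw [h2, ← sum_subcoe_filter S (fun v => c v = 2 * j) p, hrr_def]
      refine Finset.sum_congr ?_ fun v _ => rfl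
      ext v
      simp only [Finset.mem_filter, Finset.mem_univ, true_and]
      rw [hcS v]
      omega
    have hKodd : K.filter (fun k => ¬k % 2 = 0) = NS.image (fun v => 2 * (e v : ℕ) + 1) := by
      ext k
      simp only [hK_def, hNS_def, Finset.mem_filter, Finset.mem_image, Finset.mem_univ, true_and]
      constructor
      · rintro ⟨⟨v, rfl⟩, hpar⟩
        by_cases hv : v ∈ S
        · rw [hcS ⟨v, hv⟩] at hpar ⊢; omega
        · exact ⟨v, hv, (hcNS v hv).symm⟩
      · rintro ⟨v, hv, rfl⟩
        exact ⟨⟨v, hcNS v hv⟩, by omega⟩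
    have hodd_sum : ∑ k ∈ K.filter (fun k => ¬k % 2 = 0), q k * Real.logb 2 (q k)
        = ∑ v ∈ NS, q (2 * (e v : ℕ) + 1) * Real.logb 2 (q (2 * (e v : ℕ) + 1)) := by
      rw [hKodd]
      exact Finset.sum_image fun a _ b _ h =>
        e.injective (Fin.val_injective (by omega : (e a : ℕ) = e b))
    have hqodd : ∀ v ∈ NS, q (2 * (e v : ℕ) + 1) = p v := by
      intro v hv
      have hvS : v ∉ S := by
        rw [hNS_def] at hv
        exact (Finset.mem_filter.1 hv).2
      have hfs : Finset.univ.filter (fun w => c w = 2 * (e v : ℕ) + 1) = {v} := by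
        ext w
        simp only [Finset.mem_filter, Finset.mem_univ, true_and, Finset.mem_singleton]
        constructor
        · intro h
          by_cases hw : w ∈ S
          · rw [hcS ⟨w, hw⟩] at h; omega
          · rw [hcNS w hw] at h
            exact e.injective (Fin.val_injective (by omega : (e w : ℕ) = e v))
        · intro hwv
          rw [hwv]
          exact hcNS v hvS
      simp only [hq2_def]
      rw [hfs, Finset.sum_singleton]
    have hEc2 : colorEntropy p c
        = -∑ j ∈ J, rr j * Real.logb 2 (rr j) - ∑ v ∈ NS, p v * Real.logb 2 (p v) := by
      rw [hEc, ← hsplitK, heven_sum, hodd_sum]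
      rw [Finset.sum_congr rfl (fun j _ => by rw [hq2j j] :
        ∀ j ∈ J, q (2 * j) * Real.logb 2 (q (2 * j)) = rr j * Real.logb 2 (rr j))]
      rw [Finset.sum_congr rfl (fun v hv => by rw [hqodd v hv] :
        ∀ v ∈ NS, q (2 * (e v : ℕ) + 1) * Real.logb 2 (q (2 * (e v : ℕ) + 1))
          = p v * Real.logb 2 (p v))]
      ring
    have hPE' : P * colorEntropy p' c'
        = -∑ j ∈ J, rr j * Real.logb 2 (rr j) + P * Real.logb 2 P := by
      rw [hE']
      exact scale_entropy J rr P hP (fun j _ => hrr0 j) hJsum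
    have hHle : Hchi G p ≤ colorEntropy p c :=
      csInf_le (hchi_bddBelow G p hp0 hp1.le) ⟨c, hproper, rfl⟩
    have hE'0 : 0 ≤ colorEntropy p' c' := colorEntropy_nonneg p' hp'0 hp'1.le c'
    have hPE'le : P * colorEntropy p' c' ≤ colorEntropy p' c' :=
      mul_le_of_le_one_left hE'0 hP1
    linarith
  constructor
  · refine le_csInf (hchi_nonempty _ p') ?_
    rintro x ⟨c', hc', rfl⟩
    have hQP : (1:ℝ) - P = Q := by linarith
    rw [hQP]
    exact key1 c' hc'
  · rw [le_div_iff₀ hP]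
    refine le_csInf (hchi_nonempty G p) ?_
    rintro x ⟨c, hc, rfl⟩
    have h2 : Hchi (G.induce (S : Set V)) p' ≤ colorEntropy p' (fun v => c v.1) :=
      csInf_le (hchi_bddBelow _ p' hp'0 hp'1.le)
        ⟨fun v => c v.1, fun u v huv => hc u.1 v.1 huv, rfl⟩
    have h3 := key2 c hc
    nlinarith
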